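/- Let n ≥ 3 and let f_{k,ℓ} = ((M')^{-1} N M')_{k,ℓ} with k > ℓ+1. Every variable x_{i,j} appearing in f_{k,ℓ} satisfies either i = n+1−k and j ≥ ℓ+1, or i > n+1−k; moreover the variable x_{n+1−k,ℓ+1} appears in exactly one term of f_{k,ℓ}, with coefficient −1. -/

import Mathlib

open MvPolynomial

/-- The generic antidiagonal-unipotent `n × n` matrix `M'` (the matrix `w₀M`):
indeterminates `x_{i,j}` above the antidiagonal, `1`'s on the antidiagonal,
`0`'s below. -/
noncomputable def genM (K : Type*) [Field K] (n : ℕ) :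
    Matrix (Fin n) (Fin n) (MvPolynomial (Fin n × Fin n) K) := fun i j =>
  if (i : ℕ) + (j : ℕ) < n - 1 then MvPolynomial.X (i, j)
  else if (i : ℕ) + (j : ℕ) = n - 1 then 1 else 0

/-- The regular nilpotent Jordan matrix `N`, with `1`'s on the superdiagonal. -/
noncomputable def nilpMat (K : Type*) [Field K] (n : ℕ) :
    Matrix (Fin n) (Fin n) (MvPolynomial (Fin n × Fin n) K) := fun i j =>
  if (j : ℕ) = (i : ℕ) + 1 then 1 else 0

/-- The matrix `(M')⁻¹ N M'`, whose `(k,ℓ)` entry is the polynomial `f_{k,ℓ}`. -/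
noncomputable def hessMat (K : Type*) [Field K] (n : ℕ) :
    Matrix (Fin n) (Fin n) (MvPolynomial (Fin n × Fin n) K) :=
  (genM K n)⁻¹ * nilpMat K n * genM K n

section aux

variable (K : Type*) [Field K] {n : ℕ}

lemma genM_X {i j : Fin n} (h : (i : ℕ) + (j : ℕ) < n - 1) :
    genM K n i j = X (i, j) := if_pos h

lemma genM_one {i j : Fin n} (h : (i : ℕ) + (j : ℕ) = n - 1) :
    genM K n i j = 1 := by
  unfold genM; rw [if_neg (by omega), if_pos h]

lemma genM_zero {i j : Fin n} (h : n - 1 < (i : ℕ) + (j : ℕ)) :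
    genM K n i j = 0 := by
  unfold genM; rw [if_neg (by omega), if_neg (by omega)]

lemma genM_det_isUnit (n : ℕ) : IsUnit (genM K n).det := by
  have h1 : ((genM K n).submatrix Fin.revPerm id).det = 1 := by
    rw [Matrix.det_of_lowerTriangular]
    · apply Finset.prod_eq_one
      intro i _
      have : ((Fin.revPerm i : Fin n) : ℕ) = n - 1 - (i : ℕ) := by
        simp [Fin.revPerm, Fin.rev]
        omega
      simp only [Matrix.submatrix_apply, id_eq]
      exact genM_one K (by omega)
    · intro i j hij
      have hij' : (i : ℕ) < (j : ℕ) := hij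
      have : ((Fin.revPerm i : Fin n) : ℕ) = n - 1 - (i : ℕ) := by
        simp [Fin.revPerm, Fin.rev]
        omega
      simp only [Matrix.submatrix_apply, id_eq]
      exact genM_zero K (by omega)
  rw [Matrix.det_permute] at h1
  exact IsUnit.of_mul_eq_one _ ((mul_comm _ _).trans h1)

lemma genM_mul_hess (n : ℕ) :
    genM K n * hessMat K n = nilpMat K n * genM K n := by
  unfold hessMat
  rw [← Matrix.mul_assoc, ← Matrix.mul_assoc,
    Matrix.mul_nonsing_inv _ (genM_det_isUnit K n), Matrix.one_mul]

lemma hess_rec (r : ℕ) (hr : r < n) (c : Fin n) :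
    hessMat K n ⟨r, hr⟩ c
      = (if h : 1 ≤ r then genM K n ⟨n - r, by omega⟩ c else 0)
        - ∑ a ∈ Finset.univ.filter (fun a : Fin n => (a : ℕ) < r),
            X ((⟨n - 1 - r, by omega⟩ : Fin n), a) * hessMat K n a c := by
  set i : Fin n := ⟨n - 1 - r, by omega⟩ with hi
  have hiv : (i : ℕ) = n - 1 - r := rfl
  have h2 : ∑ a, genM K n i a * hessMat K n a c
      = ∑ a, nilpMat K n i a * genM K n a c := by
    have := congrFun (congrFun (genM_mul_hess K n) i) c
    simpa [Matrix.mul_apply] using this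
  have hL : ∑ a, genM K n i a * hessMat K n a c
      = (∑ a ∈ Finset.univ.filter (fun a : Fin n => (a : ℕ) < r),
          X ((i : Fin n), a) * hessMat K n a c) + hessMat K n ⟨r, hr⟩ c := by
    rw [← Finset.sum_filter_add_sum_filter_not Finset.univ (fun a : Fin n => (a : ℕ) < r)]
    congr 1
    · refine Finset.sum_congr rfl fun a ha => ?_
      rw [Finset.mem_filter] at ha
      rw [genM_X K (by have := ha.2; rw [hiv]; omega)]
    · rw [Finset.sum_eq_single (⟨r, hr⟩ : Fin n)]
      · rw [genM_one K (by rw [hiv]; show n - 1 - r + r = n - 1; omega), one_mul]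
      · intro b hb hbne
        rw [Finset.mem_filter] at hb
        have hb2 : ¬ (b : ℕ) < r := hb.2
        have hb3 : r < (b : ℕ) := by
          rcases Nat.lt_or_ge r (b : ℕ) with h | h
          · exact h
          · exact absurd (Fin.ext (by show (b:ℕ) = r; omega)) hbne
        rw [genM_zero K (by rw [hiv]; omega), zero_mul]
      · intro hmem
        exact absurd (Finset.mem_filter.mpr ⟨Finset.mem_univ _, by simp⟩) hmem
  have hR : ∑ a, nilpMat K n i a * genM K n a c
      = (if h : 1 ≤ r then genM K n ⟨n - r, by omega⟩ c else 0) := by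
    by_cases h1 : 1 ≤ r
    · rw [dif_pos h1, Finset.sum_eq_single (⟨n - r, by omega⟩ : Fin n)]
      · have : nilpMat K n i ⟨n - r, by omega⟩ = 1 := by
          unfold nilpMat; rw [if_pos (by show n - r = (i:ℕ) + 1; omega)]
        rw [this, one_mul]
      · intro b _ hbne
        have : nilpMat K n i b = 0 := by
          unfold nilpMat
          rw [if_neg]
          intro hcon
          exact hbne (Fin.ext (by rw [hiv] at hcon; show (b:ℕ) = n - r; omega))
        rw [this, zero_mul]
      · intro hmem; exact absurd (Finset.mem_univ _) hmem
    · rw [dif_neg h1]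
      apply Finset.sum_eq_zero
      intro b _
      have : nilpMat K n i b = 0 := by
        unfold nilpMat
        rw [if_neg]
        have := b.isLt
        rw [hiv]
        omega
      rw [this, zero_mul]
  linear_combination hR - hL + h2
lemma hess_main (c : Fin n) :
    ∀ r : ℕ, ∀ hr : r < n,
    (((r : ℕ) ≤ (c : ℕ)) → hessMat K n ⟨r, hr⟩ c = 0) ∧
    (r = (c : ℕ) + 1 → hessMat K n ⟨r, hr⟩ c = 1) ∧
    ((c : ℕ) + 2 ≤ r →
      ∀ i' j' : Fin n, (i' : ℕ) = n - 1 - r → (j' : ℕ) = (c : ℕ) + 1 →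
      (∀ d ∈ (hessMat K n ⟨r, hr⟩ c).support, ∀ v : Fin n × Fin n, d v ≠ 0 →
        ((v.1 : ℕ) = n - 1 - r ∧ (c : ℕ) + 1 ≤ (v.2 : ℕ)) ∨ n - 1 - r < (v.1 : ℕ)) ∧
      coeff (Finsupp.single ((i', j') : Fin n × Fin n) 1) (hessMat K n ⟨r, hr⟩ c) = -1 ∧
      (∀ d ∈ (hessMat K n ⟨r, hr⟩ c).support, d (i', j') ≠ 0 →
        d = Finsupp.single ((i', j') : Fin n × Fin n) 1)) := by
  intro r
  induction r using Nat.strong_induction_on with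
  | _ r ih =>
  intro hr
  have hrec := hess_rec K r hr c
  have hsingle : ∀ (x v : Fin n × Fin n), (Finsupp.single x (1 : ℕ)) v ≠ 0 → v = x := by
    intro x v h
    by_contra hne
    exact h (Finsupp.single_eq_of_ne' (Ne.symm hne))
  have hS0 : r ≤ (c : ℕ) + 1 →
      ∑ a ∈ Finset.univ.filter (fun a : Fin n => (a : ℕ) < r),
        X ((⟨n - 1 - r, by omega⟩ : Fin n), a) * hessMat K n a c = 0 := by
    intro hrc
    apply Finset.sum_eq_zero
    intro a ha
    rw [Finset.mem_filter] at ha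
    have h0 := (ih a ha.2 a.isLt).1 (by have := ha.2; omega)
    simp only [Fin.eta] at h0
    rw [h0, mul_zero]
  refine ⟨?_, ?_, ?_⟩
  · -- part A
    intro hrc
    rw [hrec, hS0 (by omega), sub_zero]
    by_cases h1 : 1 ≤ r
    · rw [dif_pos h1]
      exact genM_zero K (by show n - 1 < n - r + (c : ℕ); omega)
    · rw [dif_neg h1]
  · -- part B
    intro hrc
    rw [hrec, hS0 (by omega), sub_zero, dif_pos (by omega)]
    exact genM_one K (by show n - r + (c : ℕ) = n - 1; omega)
  · -- part C
    intro h2 i' j' hi' hj'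
    have hcn : (c : ℕ) + 1 < n := by omega
    set i0 : Fin n := ⟨n - 1 - r, by omega⟩ with hi0
    set j0 : Fin n := ⟨(c : ℕ) + 1, hcn⟩ with hj0
    have hi'' : i' = i0 := Fin.ext hi'
    have hj'' : j' = j0 := Fin.ext hj'
    rw [hi'', hj'']
    set w : Fin n × Fin n := ((⟨n - r, by omega⟩ : Fin n), c) with hw
    have hT : (if h : 1 ≤ r then genM K n ⟨n - r, by omega⟩ c else 0)
        = X w := by
      rw [dif_pos (by omega)]
      exact genM_X K (by show n - r + (c : ℕ) < n - 1; omega)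
    rw [hT] at hrec
    set S := ∑ a ∈ Finset.univ.filter (fun a : Fin n => (a : ℕ) < r),
        X ((i0, a) : Fin n × Fin n) * hessMat K n a c with hS
    -- facts about indices
    have hwne : w ≠ ((i0, j0) : Fin n × Fin n) := by
      intro hcon
      have := congrArg (fun p : Fin n × Fin n => (p.2 : ℕ)) hcon
      simp only [hw, hj0] at this
      omega
    have hvars : ∀ a : Fin n, (c : ℕ) + 2 ≤ (a : ℕ) → (a : ℕ) < r →
        ∀ d2 ∈ (hessMat K n a c).support, ∀ v : Fin n × Fin n, d2 v ≠ 0 →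
          n - 1 - (a : ℕ) ≤ (v.1 : ℕ) := by
      intro a hac har d2 hd2 v hv
      have hC := ((ih a har a.isLt).2.2 (by omega)
        ⟨n - 1 - (a : ℕ), by omega⟩ ⟨(c : ℕ) + 1, by omega⟩ rfl rfl).1
      simp only [Fin.eta] at hC
      rcases hC d2 hd2 v hv with ⟨h1, _⟩ | h1 <;> omega
    have hdecomp : ∀ d ∈ (hessMat K n ⟨r, hr⟩ c).support,
        d = Finsupp.single w 1 ∨ d = Finsupp.single ((i0, j0) : Fin n × Fin n) 1 ∨
        ∃ a : Fin n, (c : ℕ) + 2 ≤ (a : ℕ) ∧ (a : ℕ) < r ∧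
          ∃ d2 ∈ (hessMat K n a c).support,
            d = Finsupp.single ((i0, a) : Fin n × Fin n) 1 + d2 := by
      intro d hd
      rw [hrec] at hd
      have hd' := MvPolynomial.support_sub _ (X w) S hd
      rcases Finset.mem_union.mp hd' with h | h
      · rw [MvPolynomial.support_X, Finset.mem_singleton] at h
        exact Or.inl h
      · have h2' := MvPolynomial.support_sum h
        rcases Finset.mem_biUnion.mp h2' with ⟨a, ha, hda⟩
        rw [Finset.mem_filter] at ha
        have har : (a : ℕ) < r := ha.2
        by_cases hac : (a : ℕ) ≤ (c : ℕ)
        · have h0 := (ih a har a.isLt).1 hac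
          simp only [Fin.eta] at h0
          rw [h0, mul_zero] at hda
          simp at hda
        by_cases hac1 : (a : ℕ) = (c : ℕ) + 1
        · have h1 := (ih a har a.isLt).2.1 hac1
          simp only [Fin.eta] at h1
          rw [h1, mul_one, MvPolynomial.support_X, Finset.mem_singleton] at hda
          have haj : a = j0 := Fin.ext hac1
          rw [haj] at hda
          exact Or.inr (Or.inl hda)
        · have hac2 : (c : ℕ) + 2 ≤ (a : ℕ) := by omega
          have hsub := MvPolynomial.support_mul
            (X ((i0, a) : Fin n × Fin n)) (hessMat K n a c) hda
          rw [MvPolynomial.support_X] at hsub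
          rcases Finset.mem_add.mp hsub with ⟨d1, hd1, d2, hd2, hsum⟩
          rw [Finset.mem_singleton] at hd1
          subst hd1
          exact Or.inr (Or.inr ⟨a, hac2, har, d2, hd2, hsum.symm⟩)
    refine ⟨?_, ?_, ?_⟩
    · -- C1 : variables
      intro d hd v hv
      rcases hdecomp d hd with h | h | ⟨a, hac2, har, d2, hd2, hdd⟩
      · subst h
        have := hsingle _ _ hv
        subst this
        right
        show n - 1 - r < ((⟨n - r, by omega⟩ : Fin n) : ℕ)
        show n - 1 - r < n - r
        omega
      · subst h
        have := hsingle _ _ hv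
        subst this
        left
        exact ⟨rfl, le_refl _⟩
      · subst hdd
        rw [Finsupp.add_apply] at hv
        by_cases hz : (Finsupp.single ((i0, a) : Fin n × Fin n) 1) v ≠ 0
        · have := hsingle _ _ hz
          subst this
          left
          exact ⟨rfl, by show (c : ℕ) + 1 ≤ (a : ℕ); omega⟩
        · push_neg at hz
          rw [hz, zero_add] at hv
          have := hvars a hac2 har d2 hd2 v hv
          right
          omega
    · -- C2 : coefficient
      rw [hrec, MvPolynomial.coeff_sub]
      have hXw : coeff (Finsupp.single ((i0, j0) : Fin n × Fin n) 1) (X w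
          : MvPolynomial (Fin n × Fin n) K) = 0 := by
        rw [MvPolynomial.coeff_X', if_neg]
        intro hcon
        exact hwne (Finsupp.single_left_injective one_ne_zero hcon)
      rw [hXw, hS, MvPolynomial.coeff_sum]
      rw [Finset.sum_eq_single j0]
      · have h1 := (ih ((c : ℕ) + 1) (by omega) hcn).2.1 rfl
        have hj0e : (⟨(c : ℕ) + 1, hcn⟩ : Fin n) = j0 := rfl
        rw [hj0e] at h1
        rw [h1, mul_one, MvPolynomial.coeff_X', if_pos rfl]
        ring
      · intro a ha hane
        rw [Finset.mem_filter] at ha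
        have har : (a : ℕ) < r := ha.2
        by_cases hac : (a : ℕ) ≤ (c : ℕ)
        · have h0 := (ih a har a.isLt).1 hac
          simp only [Fin.eta] at h0
          rw [h0, mul_zero, MvPolynomial.coeff_zero]
        · have hac1 : (a : ℕ) ≠ (c : ℕ) + 1 := by
            intro hcon
            exact hane (Fin.ext hcon)
          rw [MvPolynomial.coeff_X_mul', if_neg]
          rw [Finsupp.support_single_ne_zero _ one_ne_zero, Finset.mem_singleton]
          intro hcon
          have := congrArg (fun p : Fin n × Fin n => (p.2 : ℕ)) hcon
          simp only [hj0] at this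
          exact hac1 this
      · intro hmem
        exact absurd (Finset.mem_filter.mpr ⟨Finset.mem_univ _,
          by show (c : ℕ) + 1 < r; omega⟩) hmem
    · -- C3 : uniqueness
      intro d hd hdv
      rcases hdecomp d hd with h | h | ⟨a, hac2, har, d2, hd2, hdd⟩
      · subst h
        exact absurd (hsingle _ _ hdv) (by exact fun hc => hwne hc.symm)
      · exact h
      · exfalso
        subst hdd
        rw [Finsupp.add_apply] at hdv
        have hz : (Finsupp.single ((i0, a) : Fin n × Fin n) 1) (i0, j0) = 0 := by
          apply Finsupp.single_eq_of_ne'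
          intro hcon
          have := congrArg (fun p : Fin n × Fin n => (p.2 : ℕ)) hcon
          simp only [hj0] at this
          omega
        rw [hz, zero_add] at hdv
        have := hvars a hac2 har d2 hd2 _ hdv
        simp only [hi0] at this
        omega

end aux

/-- For 1-indexed `k, ℓ` with `1 ≤ ℓ`, `ℓ + 1 < k ≤ n`: every
variable `x_{i,j}` (1-indexed) appearing in `f_{k,ℓ}` satisfies `i = n+1-k` and
`j ≥ ℓ+1`, or `i > n+1-k` (0-indexed: `v.1 = n-k ∧ v.2 ≥ ℓ`, or `v.1 > n-k`);
moreover the variable `x_{n+1-k,ℓ+1}` (0-indexed `(n-k, ℓ)`) appears in exactly one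
term of `f_{k,ℓ}`, with coefficient `-1` (that term being `-x_{n+1-k,ℓ+1}` itself). -/
theorem stmt8 {K : Type*} [Field K] {n : ℕ} (hn : 3 ≤ n)
    (k l : ℕ) (hl1 : 1 ≤ l) (hlk : l + 1 < k) (hkn : k ≤ n) :
    (∀ d ∈ (hessMat K n ⟨k - 1, by omega⟩ ⟨l - 1, by omega⟩).support,
      ∀ v : Fin n × Fin n, d v ≠ 0 →
        ((v.1 : ℕ) = n - k ∧ l ≤ (v.2 : ℕ)) ∨ n - k < (v.1 : ℕ)) ∧
    (∃! d : (Fin n × Fin n) →₀ ℕ,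
      d ∈ (hessMat K n ⟨k - 1, by omega⟩ ⟨l - 1, by omega⟩).support ∧
        d ((⟨n - k, by omega⟩ : Fin n), (⟨l, by omega⟩ : Fin n)) ≠ 0) ∧
    MvPolynomial.coeff
      (Finsupp.single ((⟨n - k, by omega⟩ : Fin n), (⟨l, by omega⟩ : Fin n)) 1)
      (hessMat K n ⟨k - 1, by omega⟩ ⟨l - 1, by omega⟩) = -1 := by
  obtain ⟨-, -, hC⟩ := hess_main K (⟨l - 1, by omega⟩ : Fin n) (k - 1) (by omega)
  obtain ⟨hvars, hcoeff, huniq⟩ := hC (by show l - 1 + 2 ≤ k - 1; omega)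
    ⟨n - k, by omega⟩ ⟨l, by omega⟩
    (by show n - k = n - 1 - (k - 1); omega)
    (by show l = l - 1 + 1; omega)
  have hcv : ((⟨l - 1, by omega⟩ : Fin n) : ℕ) = l - 1 := rfl
  refine ⟨?_, ?_, ?_⟩
  · intro d hd v hv
    rcases hvars d hd v hv with ⟨ha, hb⟩ | ha
    · rw [hcv] at hb
      exact Or.inl ⟨by omega, by omega⟩
    · exact Or.inr (by omega)
  · refine ⟨Finsupp.single ((⟨n - k, by omega⟩ : Fin n), (⟨l, by omega⟩ : Fin n)) 1,
      ⟨?_, ?_⟩, ?_⟩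
    · exact MvPolynomial.mem_support_iff.mpr
        (ne_of_eq_of_ne hcoeff (neg_ne_zero.mpr one_ne_zero))
    · rw [Finsupp.single_eq_same]
      exact one_ne_zero
    · intro d' hd'
      exact huniq d' hd'.1 hd'.2
  · exact hcoeff
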